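/- Let A₈ ∈ ℝ^{8×8} be the matrix of the linear map (z₁,…,z₈) ↦ (z₂, z₃+z₅+z₇, z₄+z₇, 0, z₆, 0, z₈, 0) and let B₈ ∈ ℝ^{8×3} have columns e₆, e₈, e₄ (standard basis of ℝ⁸). Then for the output rows e₁, e₃, e₄: e₁ᵀA₈ᵏB₈ = 0 for k ∈ {0,1,2} and e₁ᵀA₈³B₈ = (1,1,1) ≠ 0, so z₁ has relative degree 4; e₃ᵀB₈ = 0 and e₃ᵀA₈B₈ = (0,0,1) ≠ 0, so z₃ has relative degree 2; e₄ᵀB₈ = (0,0,1) ≠ 0, so z₄ has relative degree 1. The relative degrees sum to 4+2+1 = 7 < 8 = n, so the output (x₁, x₃, x₄) is not a flat output of this 8-dimensional prolonged system. -/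

import Mathlib

open Matrix

/-- For the linear system `ẋ = A x + B u`, the scalar output `y = cᵀ x`
has relative degree `r`: `cᵀ Aᵏ B = 0` for all `0 ≤ k ≤ r − 2`
and `cᵀ A^(r−1) B ≠ 0`. -/
def HasRelDeg {n m : ℕ} (A : Matrix (Fin n) (Fin n) ℝ)
    (B : Matrix (Fin n) (Fin m) ℝ) (c : Fin n → ℝ) (r : ℕ) : Prop :=
  0 < r ∧ (∀ k : ℕ, k + 1 < r → Matrix.vecMul c (A ^ k * B) = 0) ∧
    Matrix.vecMul c (A ^ (r - 1) * B) ≠ 0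

/-- Decoupling matrix: its `i`-th row is `cᵢᵀ A^(rᵢ−1) B`. -/
def Decoupling {n m q : ℕ} (A : Matrix (Fin n) (Fin n) ℝ)
    (B : Matrix (Fin n) (Fin m) ℝ) (c : Fin q → Fin n → ℝ) (r : Fin q → ℕ) :
    Matrix (Fin q) (Fin m) ℝ :=
  fun i => Matrix.vecMul (c i) (A ^ (r i - 1) * B)

/-- Flat (exactly state-space linearizing) output: each `cᵢ` has relative
degree `rᵢ`, the relative degrees sum to the state dimension `n`, and the
(square) decoupling matrix is invertible. -/
def IsFlatOutput {n m : ℕ} (A : Matrix (Fin n) (Fin n) ℝ)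
    (B : Matrix (Fin n) (Fin m) ℝ) (c : Fin m → Fin n → ℝ) (r : Fin m → ℕ) : Prop :=
  (∀ i, HasRelDeg A B (c i) (r i)) ∧ (∑ i, r i) = n ∧
    IsUnit (Decoupling A B c r).det

/-- Controllability matrix `[B, AB, …, A^(n−1)B]`, with columns indexed by
`Fin n × Fin m` (the `(k, j)` column is `Aᵏ` times the `j`-th column of `B`). -/
def CtrbMat {n m : ℕ} (A : Matrix (Fin n) (Fin n) ℝ)
    (B : Matrix (Fin n) (Fin m) ℝ) : Matrix (Fin n) (Fin n × Fin m) ℝ :=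
  fun i p => (A ^ (p.1 : ℕ) * B) i p.2

/-- Drift matrix of the prolonged system `Σ^(2,2,0)`:
`(z₁,…,z₈) ↦ (z₂, z₃+z₅+z₇, z₄+z₇, 0, z₆, 0, z₈, 0)`. -/
def A8 : Matrix (Fin 8) (Fin 8) ℝ :=
  !![0,1,0,0,0,0,0,0;
     0,0,1,0,1,0,1,0;
     0,0,0,1,0,0,1,0;
     0,0,0,0,0,0,0,0;
     0,0,0,0,0,1,0,0;
     0,0,0,0,0,0,0,0;
     0,0,0,0,0,0,0,1;
     0,0,0,0,0,0,0,0]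

/-- Input matrix of `Σ^(2,2,0)`: columns `e₆`, `e₈`, `e₄`. -/
def B8 : Matrix (Fin 8) (Fin 3) ℝ :=
  !![0,0,0; 0,0,0; 0,0,0; 0,0,1; 0,0,0; 1,0,0; 0,0,0; 0,1,0]

section Aux

lemma relDeg_unique {n m : ℕ} {A : Matrix (Fin n) (Fin n) ℝ}
    {B : Matrix (Fin n) (Fin m) ℝ} {c : Fin n → ℝ} {r s : ℕ}
    (h : HasRelDeg A B c r) (h' : HasRelDeg A B c s) : r = s := by
  obtain ⟨hr, hz, hnz⟩ := h
  obtain ⟨hs, hz', hnz'⟩ := h'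
  rcases lt_trichotomy r s with h1 | h1 | h1
  · exact absurd (hz' (r - 1) (by omega)) hnz
  · exact h1
  · exact absurd (hz (s - 1) (by omega)) hnz'

lemma c1_pow (k : ℕ) (hk : k ≤ 2) :
    Matrix.vecMul ![1,0,0,0,0,0,0,0] (A8 ^ k * B8) = 0 := by
  interval_cases k <;> (ext j; fin_cases j) <;>
  norm_num [A8, B8, pow_succ, Matrix.vecMul, Matrix.mul_apply, dotProduct, Matrix.one_apply,
    Fin.sum_univ_succ, Matrix.cons_val_zero, Matrix.cons_val_succ]

lemma c1_pow3 : Matrix.vecMul ![1,0,0,0,0,0,0,0] (A8 ^ 3 * B8) = ![1,1,1] := by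
  ext j; fin_cases j <;>
  norm_num [A8, B8, pow_succ, Matrix.vecMul, Matrix.mul_apply, dotProduct,
    Fin.sum_univ_succ, Matrix.cons_val_zero, Matrix.cons_val_succ]

lemma c3_pow0 : Matrix.vecMul ![0,0,1,0,0,0,0,0] B8 = 0 := by
  ext j; fin_cases j <;>
  norm_num [B8, Matrix.vecMul, dotProduct,
    Fin.sum_univ_succ, Matrix.cons_val_zero, Matrix.cons_val_succ]

lemma c3_pow1 : Matrix.vecMul ![0,0,1,0,0,0,0,0] (A8 * B8) = ![0,0,1] := by
  ext j; fin_cases j <;>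
  norm_num [A8, B8, Matrix.vecMul, Matrix.mul_apply, dotProduct,
    Fin.sum_univ_succ, Matrix.cons_val_zero, Matrix.cons_val_succ]

lemma c4_pow0 : Matrix.vecMul ![0,0,0,1,0,0,0,0] B8 = ![0,0,1] := by
  ext j; fin_cases j <;>
  norm_num [B8, Matrix.vecMul, dotProduct,
    Fin.sum_univ_succ, Matrix.cons_val_zero, Matrix.cons_val_succ]

lemma v111_ne : (![1,1,1] : Fin 3 → ℝ) ≠ 0 := by
  intro h
  have := congrFun h 0
  norm_num at this

lemma v001_ne : (![0,0,1] : Fin 3 → ℝ) ≠ 0 := by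
  intro h
  have := congrFun h 2
  change (1:ℝ) = 0 at this
  norm_num at this

lemma rd1 : HasRelDeg A8 B8 ![1,0,0,0,0,0,0,0] 4 := by
  refine ⟨by norm_num, fun k hk => c1_pow k (by omega), ?_⟩
  rw [show (4 : ℕ) - 1 = 3 from rfl, c1_pow3]
  exact v111_ne

lemma rd3 : HasRelDeg A8 B8 ![0,0,1,0,0,0,0,0] 2 := by
  refine ⟨by norm_num, fun k hk => ?_, ?_⟩
  · have : k = 0 := by omega
    subst this
    simpa [pow_zero, Matrix.one_mul] using c3_pow0
  · rw [show (2 : ℕ) - 1 = 1 from rfl, pow_one, c3_pow1]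
    exact v001_ne

lemma rd4 : HasRelDeg A8 B8 ![0,0,0,1,0,0,0,0] 1 := by
  refine ⟨by norm_num, fun k hk => by omega, ?_⟩
  rw [show (1 : ℕ) - 1 = 0 from rfl, pow_zero, Matrix.one_mul, c4_pow0]
  exact v001_ne

end Aux

/-- on `Σ^(2,2,0)`, the outputs `z₁, z₃, z₄` have relative
degrees `4, 2, 1` summing to `7 < 8 = n`; hence `(x₁, x₃, x₄)` is not a flat
output of this 8-dimensional prolonged system. -/


theorem stmt_11 :
    (∀ k : ℕ, k ≤ 2 → Matrix.vecMul ![1,0,0,0,0,0,0,0] (A8 ^ k * B8) = 0) ∧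
    Matrix.vecMul ![1,0,0,0,0,0,0,0] (A8 ^ 3 * B8) = ![1,1,1] ∧
    (![1,1,1] : Fin 3 → ℝ) ≠ 0 ∧
    HasRelDeg A8 B8 ![1,0,0,0,0,0,0,0] 4 ∧
    Matrix.vecMul ![0,0,1,0,0,0,0,0] B8 = 0 ∧
    Matrix.vecMul ![0,0,1,0,0,0,0,0] (A8 * B8) = ![0,0,1] ∧
    (![0,0,1] : Fin 3 → ℝ) ≠ 0 ∧
    HasRelDeg A8 B8 ![0,0,1,0,0,0,0,0] 2 ∧
    Matrix.vecMul ![0,0,0,1,0,0,0,0] B8 = ![0,0,1] ∧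
    HasRelDeg A8 B8 ![0,0,0,1,0,0,0,0] 1 ∧
    (4 + 2 + 1 = 7 ∧ (7 : ℕ) < 8) ∧
    (∀ r : Fin 3 → ℕ,
      ¬ IsFlatOutput A8 B8
        ![![1,0,0,0,0,0,0,0], ![0,0,1,0,0,0,0,0], ![0,0,0,1,0,0,0,0]] r) := by
  
  refine ⟨c1_pow, c1_pow3, v111_ne, rd1, c3_pow0, c3_pow1, v001_ne, rd3, c4_pow0, rd4,
    ⟨rfl, by norm_num⟩, ?_⟩
  intro r hflat
  obtain ⟨hrd, hsum, _⟩ := hflat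
  have h0 : r 0 = 4 := relDeg_unique (by simpa using hrd 0) rd1
  have h1 : r 1 = 2 := relDeg_unique (by simpa using hrd 1) rd3
  have h2 : r 2 = 1 := relDeg_unique (by simpa using hrd 2) rd4
  rw [Fin.sum_univ_three, h0, h1, h2] at hsum
  omega
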